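/- arXiv:1412.7523 — 8 statements merged into one kernel-verified Lean document; each statement's English description precedes it below -/
import Mathlib

section
/- Let γ ≠ 0 and F be real constants and let q : ℝ → ℝ satisfy q''(t) = F - 2γ q'(t). Then the function I₆(t) = F·log|(1/(2γ))(2γq'(t) - F)·exp(2γt)| - 2γ·(Ft - 2γq(t) - q'(t)) is constant on any interval where 2γq'(t) ≠ F. -/
/-- For damped motion under a constant force, on any interval where `2γ q' ≠ F`,
`I₆ = F log|I₁| - 2γ I₂` is constant. -/
theorem I6_const (γ F : ℝ) (hγ : γ ≠ 0) (q q' : ℝ → ℝ)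
    (hq : ∀ t, HasDerivAt q (q' t) t)
    (hq' : ∀ t, HasDerivAt q' (F - 2 * γ * q' t) t)
    (a b : ℝ) (hne : ∀ t ∈ Set.Icc a b, 2 * γ * q' t ≠ F) :
    ∀ s ∈ Set.Icc a b, ∀ t ∈ Set.Icc a b,
      F * Real.log |(1 / (2 * γ)) * (2 * γ * q' s - F) * Real.exp (2 * γ * s)|
          - 2 * γ * (F * s - 2 * γ * q s - q' s) =
      F * Real.log |(1 / (2 * γ)) * (2 * γ * q' t - F) * Real.exp (2 * γ * t)|
          - 2 * γ * (F * t - 2 * γ * q t - q' t) := by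
  set g : ℝ → ℝ := fun t =>
    F * Real.log ((1 / (2 * γ)) * (2 * γ * q' t - F) * Real.exp (2 * γ * t))
      - 2 * γ * (F * t - 2 * γ * q t - q' t) with hg
  have key : ∀ t ∈ Set.Icc a b, HasDerivAt g 0 t := by
    intro t ht
    have hfne : (1 / (2 * γ)) * (2 * γ * q' t - F) * Real.exp (2 * γ * t) ≠ 0 := by
      have h1 : 2 * γ * q' t - F ≠ 0 := sub_ne_zero.mpr (hne t ht)
      have h2 : (1 : ℝ) / (2 * γ) ≠ 0 := by
        simp [hγ]
      exact mul_ne_zero (mul_ne_zero h2 h1) (Real.exp_ne_zero _)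
    have hu : HasDerivAt (fun t => (1 / (2 * γ)) * (2 * γ * q' t - F) * Real.exp (2 * γ * t))
        0 t := by
      have hinner : HasDerivAt (fun t => (1 / (2 * γ)) * (2 * γ * q' t - F))
          ((1 / (2 * γ)) * (2 * γ * (F - 2 * γ * q' t))) t := by
        have := (((hq' t).const_mul (2 * γ)).sub_const F).const_mul (1 / (2 * γ))
        convert this using 1
      have hexp : HasDerivAt (fun t => Real.exp (2 * γ * t))
          (Real.exp (2 * γ * t) * (2 * γ)) t := by
        have h2 : HasDerivAt (fun t : ℝ => 2 * γ * t) (2 * γ) t := by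
          simpa using (hasDerivAt_id t).const_mul (2 * γ)
        exact (Real.hasDerivAt_exp _).comp t h2
      have := hinner.mul hexp
      exact this.congr_deriv (by field_simp; ring)
    have hlog : HasDerivAt (fun t =>
        Real.log ((1 / (2 * γ)) * (2 * γ * q' t - F) * Real.exp (2 * γ * t))) 0 t := by
      simpa using hu.log hfne
    have hrest : HasDerivAt (fun t => F * t - 2 * γ * q t - q' t)
        (F - 2 * γ * q' t - (F - 2 * γ * q' t)) t := by
      have hFt : HasDerivAt (fun t : ℝ => F * t) F t := by
        simpa using (hasDerivAt_id t).const_mul F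
      exact (hFt.sub ((hq t).const_mul (2 * γ))).sub (hq' t)
    have := (hlog.const_mul F).sub (hrest.const_mul (2 * γ))
    exact this.congr_deriv (by ring)
  have hconst : ∀ x ∈ Set.Icc a b, g x = g a := by
    apply constant_of_has_deriv_right_zero
    · exact fun x hx => (key x hx).continuousAt.continuousWithinAt
    · exact fun x hx => ((key x (Set.mem_Icc_of_Ico hx)).hasDerivWithinAt)
  intro s hs t ht
  have habs : ∀ u : ℝ,
      F * Real.log |(1 / (2 * γ)) * (2 * γ * q' u - F) * Real.exp (2 * γ * u)|
        - 2 * γ * (F * u - 2 * γ * q u - q' u) = g u := by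
    intro u
    rw [hg]
    rw [Real.log_abs]
  rw [habs s, habs t, hconst s hs, hconst t ht]
end

section
/- Let γ, F be real constants with γ ≠ 0 and let q : ℝ → ℝ satisfy q''(t) = F - 2γ q'(t). Suppose 2γ(Ft - 2γq(t) - q'(t)) + F ≠ 0 for all t in an interval J. Then I₇(t) = [(1/(2γ))(2γq'(t) - F)e^{2γt}] / [2γ(Ft - 2γq(t) - q'(t)) + F] is constant on J. -/
/-- For damped motion under a constant force, on any interval where `2γ I₂ + F ≠ 0`,
`I₇ = I₁ / (2γ I₂ + F)` is constant. -/
theorem I7_const (γ F : ℝ) (hγ : γ ≠ 0) (q q' : ℝ → ℝ)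
    (hq : ∀ t, HasDerivAt q (q' t) t)
    (hq' : ∀ t, HasDerivAt q' (F - 2 * γ * q' t) t)
    (a b : ℝ)
    (hne : ∀ t ∈ Set.Icc a b, 2 * γ * (F * t - 2 * γ * q t - q' t) + F ≠ 0) :
    ∀ s ∈ Set.Icc a b, ∀ t ∈ Set.Icc a b,
      ((1 / (2 * γ)) * (2 * γ * q' s - F) * Real.exp (2 * γ * s)) /
          (2 * γ * (F * s - 2 * γ * q s - q' s) + F) =
      ((1 / (2 * γ)) * (2 * γ * q' t - F) * Real.exp (2 * γ * t)) /
          (2 * γ * (F * t - 2 * γ * q t - q' t) + F) := by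
  have hN : ∀ t, HasDerivAt
      (fun t => (1 / (2 * γ)) * (2 * γ * q' t - F) * Real.exp (2 * γ * t)) 0 t := by
    intro t
    have h1 : HasDerivAt (fun t => (1 / (2 * γ)) * (2 * γ * q' t - F))
        ((1 / (2 * γ)) * (2 * γ * (F - 2 * γ * q' t))) t := by
      exact (((hq' t).const_mul (2 * γ)).sub_const F).const_mul _
    have h2 : HasDerivAt (fun t => Real.exp (2 * γ * t)) (Real.exp (2 * γ * t) * (2 * γ)) t := by
      simpa [Function.comp_def] using (Real.hasDerivAt_exp _).comp t ((hasDerivAt_id t).const_mul (2 * γ))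
    have := h1.mul h2
    refine this.congr_deriv ?_
    have h2γ : (2 * γ) ≠ 0 := by positivity
    ring
  have hD : ∀ t, HasDerivAt
      (fun t => 2 * γ * (F * t - 2 * γ * q t - q' t) + F) 0 t := by
    intro t
    have h1 : HasDerivAt (fun t => F * t - 2 * γ * q t - q' t)
        (F - 2 * γ * q' t - (F - 2 * γ * q' t)) t := by
      simpa [Pi.sub_def] using (((hasDerivAt_id t).const_mul F).sub ((hq t).const_mul (2 * γ))).sub (hq' t)
    have := (h1.const_mul (2 * γ)).add_const F
    refine this.congr_deriv ?_
    ring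
  have hNc : ∀ x y : ℝ, (1 / (2 * γ)) * (2 * γ * q' x - F) * Real.exp (2 * γ * x)
      = (1 / (2 * γ)) * (2 * γ * q' y - F) * Real.exp (2 * γ * y) := by
    apply is_const_of_deriv_eq_zero
    · exact fun t => (hN t).differentiableAt
    · exact fun t => (hN t).deriv
  have hDc : ∀ x y : ℝ, 2 * γ * (F * x - 2 * γ * q x - q' x) + F
      = 2 * γ * (F * y - 2 * γ * q y - q' y) + F := by
    apply is_const_of_deriv_eq_zero
    · exact fun t => (hD t).differentiableAt
    · exact fun t => (hD t).deriv
  intro s _ t _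
  rw [hNc s t, hDc s t]
end

section
/- Under the hypotheses of the previous statement, suppose ℓ₀ := r(0) × r'(0) ≠ 0. Then for all t, the inner product ⟨r(t), ℓ₀⟩ = 0, i.e. the motion takes place in the plane through the origin orthogonal to ℓ₀. -/
/-- The cross product on `EuclideanSpace ℝ (Fin 3)`. -/
noncomputable def cross3 (a b : EuclideanSpace ℝ (Fin 3)) : EuclideanSpace ℝ (Fin 3) :=
  (WithLp.equiv 2 (Fin 3 → ℝ)).symm
    ![a 1 * b 2 - a 2 * b 1, a 2 * b 0 - a 0 * b 2, a 0 * b 1 - a 1 * b 0]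

lemma exp_decay_aux (γ : ℝ) (f f' : ℝ → ℝ) (hf : ∀ t, HasDerivAt f (f' t) t)
    (h : ∀ t, f' t = -(2 * γ) * f t) (t : ℝ) :
    Real.exp (2 * γ * t) * f t = f 0 := by
  have key : ∀ s : ℝ, HasDerivAt (fun u => Real.exp (2 * γ * u) * f u) 0 s := by
    intro s
    have h1 : HasDerivAt (fun u => Real.exp (2 * γ * u)) (2 * γ * Real.exp (2 * γ * s)) s := by
      have := ((hasDerivAt_id s).const_mul (2 * γ)).exp
      simpa [mul_comm] using this
    have h2 := h1.mul (hf s)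
    exact h2.congr_deriv (by rw [h s]; ring)
  have hconst : ∀ a b : ℝ,
      (fun u => Real.exp (2 * γ * u) * f u) a = (fun u => Real.exp (2 * γ * u) * f u) b :=
    fun a b => is_const_of_deriv_eq_zero (fun x => (key x).differentiableAt)
      (fun x => (key x).deriv) a b
  simpa using hconst t 0

lemma comp_decay (γ : ℝ) (c : ℝ → ℝ) (ra rb ra' rb' ra'' rb'' : ℝ → ℝ)
    (ha : ∀ t, HasDerivAt ra (ra' t) t) (ha' : ∀ t, HasDerivAt ra' (ra'' t) t)
    (hb : ∀ t, HasDerivAt rb (rb' t) t) (hb' : ∀ t, HasDerivAt rb' (rb'' t) t)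
    (hA : ∀ t, ra'' t = -(c t) * ra t - (2 * γ) * ra' t)
    (hB : ∀ t, rb'' t = -(c t) * rb t - (2 * γ) * rb' t) (t : ℝ) :
    Real.exp (2 * γ * t) * (ra t * rb' t - rb t * ra' t)
      = ra 0 * rb' 0 - rb 0 * ra' 0 := by
  apply exp_decay_aux γ _ (fun t => (ra' t * rb' t + ra t * rb'' t)
      - (rb' t * ra' t + rb t * ra'' t))
  · intro s
    exact ((ha s).mul (hb' s)).sub ((hb s).mul (ha' s))
  · intro s
    rw [hA s, hB s]; ring

/-- For damped motion in a central potential with nonzero initial angular momentum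
`ℓ₀ = r(0) × r'(0)`, the motion stays in the plane through the origin orthogonal to `ℓ₀`. -/
theorem planar_motion (γ : ℝ) (V V' : ℝ → ℝ)
    (hV : ∀ x, HasDerivAt V (V' x) x)
    (r r' r'' : ℝ → EuclideanSpace ℝ (Fin 3))
    (hr : ∀ t, HasDerivAt r (r' t) t)
    (hr' : ∀ t, HasDerivAt r' (r'' t) t)
    (hne : ∀ t, ‖r t‖ ≠ 0)
    (heq : ∀ t, r'' t = (-(V' ‖r t‖ / ‖r t‖)) • r t - (2 * γ) • r' t)
    (hl : cross3 (r 0) (r' 0) ≠ 0) :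
    ∀ t : ℝ, inner ℝ (r t) (cross3 (r 0) (r' 0)) = (0 : ℝ) := by
  have hcomp : ∀ (f f' : ℝ → EuclideanSpace ℝ (Fin 3)), (∀ t, HasDerivAt f (f' t) t) →
      ∀ (i : Fin 3) (t : ℝ), HasDerivAt (fun s => f s i) (f' t i) t := by
    intro f f' hf i t
    have := (EuclideanSpace.proj i).hasFDerivAt.comp_hasDerivAt t (hf t)
    exact this
  have heqi : ∀ (i : Fin 3) (t : ℝ),
      r'' t i = -(V' ‖r t‖ / ‖r t‖) * r t i - (2 * γ) * r' t i := by
    intro i t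
    rw [heq t]
    simp [PiLp.sub_apply, PiLp.smul_apply]
  have key : ∀ (a b : Fin 3) (t : ℝ),
      Real.exp (2 * γ * t) * (r t a * r' t b - r t b * r' t a)
        = r 0 a * r' 0 b - r 0 b * r' 0 a := by
    intro a b t
    exact comp_decay γ (fun t => V' ‖r t‖ / ‖r t‖) (fun s => r s a) (fun s => r s b)
      (fun s => r' s a) (fun s => r' s b) (fun s => r'' s a) (fun s => r'' s b)
      (hcomp r r' hr a) (hcomp r' r'' hr' a) (hcomp r r' hr b) (hcomp r' r'' hr' b)
      (heqi a) (heqi b) t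
  intro t
  have c0 : cross3 (r 0) (r' 0) 0 = r 0 1 * r' 0 2 - r 0 2 * r' 0 1 := by simp [cross3]
  have c1 : cross3 (r 0) (r' 0) 1 = r 0 2 * r' 0 0 - r 0 0 * r' 0 2 := by simp [cross3]
  have c2 : cross3 (r 0) (r' 0) 2 = r 0 0 * r' 0 1 - r 0 1 * r' 0 0 := by simp [cross3]
  have hinner : (inner ℝ (r t) (cross3 (r 0) (r' 0)) : ℝ)
      = r t 0 * cross3 (r 0) (r' 0) 0 + r t 1 * cross3 (r 0) (r' 0) 1
        + r t 2 * cross3 (r 0) (r' 0) 2 := by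
    simp [PiLp.inner_apply, Fin.sum_univ_three, mul_comm]
  rw [hinner, c0, c1, c2, ← key 1 2 t, ← key 2 0 t, ← key 0 1 t]
  ring
end

section
/- Let γ, A be real constants and let q : ℝ → ℝ be twice differentiable with q(t) > 0 and q''(t) = -A/q(t) - 2γ q'(t) for all t. Then the function I(t) = ½(q'(t) + 2γ q(t))² + A·log(q(t)) + 2γ A t is constant. -/
/-- For damped motion in the logarithmic potential `V₁(q) = A log q`,
`I = ½(q' + 2γq)² + A log q + 2γAt` is constant. -/
theorem I_log_potential_const (γ A : ℝ) (q q' : ℝ → ℝ)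
    (hpos : ∀ t, q t > 0)
    (hq : ∀ t, HasDerivAt q (q' t) t)
    (hq' : ∀ t, HasDerivAt q' (-A / q t - 2 * γ * q' t) t) :
    ∀ s t : ℝ,
      (1 / 2) * (q' s + 2 * γ * q s) ^ 2 + A * Real.log (q s) + 2 * γ * A * s =
      (1 / 2) * (q' t + 2 * γ * q t) ^ 2 + A * Real.log (q t) + 2 * γ * A * t := by
  have key : ∀ t : ℝ, HasDerivAt
      (fun t => (1 / 2) * (q' t + 2 * γ * q t) ^ 2 + A * Real.log (q t) + 2 * γ * A * t)
      0 t := by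
    intro t
    have h1 : HasDerivAt (fun t => q' t + 2 * γ * q t)
        ((-A / q t - 2 * γ * q' t) + 2 * γ * q' t) t :=
      (hq' t).add ((hq t).const_mul (2 * γ))
    have h2 : HasDerivAt (fun t => (1 / 2) * (q' t + 2 * γ * q t) ^ 2)
        ((1 / 2) * (2 * (q' t + 2 * γ * q t) ^ 1 *
          ((-A / q t - 2 * γ * q' t) + 2 * γ * q' t))) t :=
      (h1.pow 2).const_mul (1 / 2)
    have h3 : HasDerivAt (fun t => A * Real.log (q t)) (A * ((q t)⁻¹ * q' t)) t := by
      simpa [Function.comp] using ((Real.hasDerivAt_log (hpos t).ne').comp t (hq t)).const_mul A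
    have h4 : HasDerivAt (fun t : ℝ => 2 * γ * A * t) (2 * γ * A) t := by
      simpa using (hasDerivAt_id t).const_mul (2 * γ * A)
    have := (h2.add h3).add h4
    refine HasDerivAt.congr_deriv this ?_
    have hne : q t ≠ 0 := (hpos t).ne'
    field_simp
    ring
  intro s t
  have := is_const_of_deriv_eq_zero (f := fun t =>
      (1 / 2) * (q' t + 2 * γ * q t) ^ 2 + A * Real.log (q t) + 2 * γ * A * t)
    (fun x => (key x).differentiableAt) (fun x => (key x).deriv) s t
  simpa using this
end

section
/- Let γ, A, α be real constants with α ∉ {-2, 0}, and let q : ℝ → ℝ be twice differentiable with q(t) > 0 and q''(t) = -Aα·q(t)^{α-1} - (8γ²α/(α+2)²)·q(t) - 2γ q'(t) for all t. Then I(t) = (½(q'(t) + (4γ/(α+2))q(t))² + A·q(t)^α)·exp(4γα t/(α+2)) is constant. -/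
/-- For damped motion in the potential `V₂(q) = A q^α + (4γ²α/(α+2)²) q²`,
`I = (½(q' + (4γ/(α+2))q)² + A q^α) e^{4γαt/(α+2)}` is constant. -/
theorem I_power_potential_const (γ A α : ℝ) (hα2 : α ≠ -2) (hα0 : α ≠ 0)
    (q q' : ℝ → ℝ)
    (hpos : ∀ t, q t > 0)
    (hq : ∀ t, HasDerivAt q (q' t) t)
    (hq' : ∀ t, HasDerivAt q'
      (-(A * α) * q t ^ (α - 1) - (8 * γ ^ 2 * α / (α + 2) ^ 2) * q t - 2 * γ * q' t) t) :
    ∀ s t : ℝ,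
      ((1 / 2) * (q' s + (4 * γ / (α + 2)) * q s) ^ 2 + A * q s ^ α) *
          Real.exp (4 * γ * α * s / (α + 2)) =
      ((1 / 2) * (q' t + (4 * γ / (α + 2)) * q t) ^ 2 + A * q t ^ α) *
          Real.exp (4 * γ * α * t / (α + 2)) := by
  have hα2' : α + 2 ≠ 0 := fun h => hα2 (by linarith)
  have key : ∀ t, HasDerivAt (fun x =>
      ((1 / 2) * (q' x + (4 * γ / (α + 2)) * q x) ^ 2 + A * q x ^ α) *
        Real.exp (4 * γ * α * x / (α + 2))) 0 t := by
    intro t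
    have hne : q t ≠ 0 := ne_of_gt (hpos t)
    have h1 : HasDerivAt (fun x => q' x + (4 * γ / (α + 2)) * q x)
        ((-(A * α) * q t ^ (α - 1) - (8 * γ ^ 2 * α / (α + 2) ^ 2) * q t - 2 * γ * q' t)
          + (4 * γ / (α + 2)) * q' t) t := (hq' t).add ((hq t).const_mul _)
    have h2 := (h1.pow 2).const_mul (1 / 2 : ℝ)
    have h3 := (((hq t).rpow_const (p := α) (Or.inl hne))).const_mul A
    have h4 := h2.add h3
    have h5 : HasDerivAt (fun x : ℝ => 4 * γ * α * x / (α + 2)) (4 * γ * α / (α + 2)) t := by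
      simpa using ((hasDerivAt_id t).const_mul (4 * γ * α)).div_const (α + 2)
    have h6 := h5.exp
    have full := h4.mul h6
    convert full using 1
    case e'_4 => rfl
    case e'_5 => rfl
    case e'_8 => rfl
    have hQ : q t ^ (α - 1) = q t ^ α / q t := by
      rw [eq_div_iff hne, ← Real.rpow_add_one hne]; ring_nf
    rw [hQ]
    simp only [Pi.add_apply, Pi.pow_apply]
    push_cast
    field_simp
    ring
  intro s t
  exact is_const_of_deriv_eq_zero (fun x => (key x).differentiableAt)
    (fun x => (key x).deriv) s t
end

section
/- Let γ, A be real constants and let q : ℝ → ℝ be twice differentiable with q''(t) = -A·exp(q(t)) - 8γ² - 2γ q'(t) for all t. Then the function I(t) = (½(q'(t) + 4γ)² + A·exp(q(t)))·exp(4γ t) is constant. -/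
/-- For damped motion in the potential `V₃(q) = A e^q + 8γ² q`,
`I = (½(q' + 4γ)² + A e^q) e^{4γt}` is constant. -/
theorem I_exp_potential_const (γ A : ℝ) (q q' : ℝ → ℝ)
    (hq : ∀ t, HasDerivAt q (q' t) t)
    (hq' : ∀ t, HasDerivAt q' (-A * Real.exp (q t) - 8 * γ ^ 2 - 2 * γ * q' t) t) :
    ∀ s t : ℝ,
      ((1 / 2) * (q' s + 4 * γ) ^ 2 + A * Real.exp (q s)) * Real.exp (4 * γ * s) =
      ((1 / 2) * (q' t + 4 * γ) ^ 2 + A * Real.exp (q t)) * Real.exp (4 * γ * t) := by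
  have key : ∀ t : ℝ, HasDerivAt
      (fun t => ((1 / 2) * (q' t + 4 * γ) ^ 2 + A * Real.exp (q t)) * Real.exp (4 * γ * t))
      0 t := by
    intro t
    have h1 : HasDerivAt (fun t => (1 / 2) * (q' t + 4 * γ) ^ 2 + A * Real.exp (q t))
        ((1 / 2) * (2 * (q' t + 4 * γ) * (-A * Real.exp (q t) - 8 * γ ^ 2 - 2 * γ * q' t))
          + A * (Real.exp (q t) * q' t)) t := by
      have := ((((hq' t).add_const (4 * γ)).pow 2).const_mul (1 / 2)).add
        (((Real.hasDerivAt_exp (q t)).comp t (hq t)).const_mul A)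
      refine this.congr_deriv ?_
      push_cast
      ring
    have h2 : HasDerivAt (fun t : ℝ => Real.exp (4 * γ * t)) (Real.exp (4 * γ * t) * (4 * γ)) t := by
      have := (Real.hasDerivAt_exp (4 * γ * t)).comp t ((hasDerivAt_id t).const_mul (4 * γ))
      simp at this
      exact this
    have := h1.mul h2
    refine this.congr_deriv ?_
    ring
  intro s t
  have hconst := fun x y => constant_of_has_deriv_right_zero
    (f := fun t => ((1 / 2) * (q' t + 4 * γ) ^ 2 + A * Real.exp (q t)) * Real.exp (4 * γ * t))
    (a := x) (b := y)
    (fun z _ => (key z).continuousAt.continuousWithinAt)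
    (fun z _ => (key z).hasDerivWithinAt)
  rcases le_total s t with h | h
  · exact (hconst s t t (by simpa using h)).symm
  · exact hconst t s s (by simpa using h)
end

section
/- Let γ ≠ 0 be a real constant, V : ℝ → ℝ differentiable, and q : ℝ → ℝ twice differentiable satisfying q''(t) = -V'(q(t)) - 2γ q'(t). Let H(t) = ½q'(t)² + V(q(t)) denote the mechanical energy and A(t) = ∫₀ᵗ (½q'(s)² - V(q(s)))·exp(2γs) ds the BCK action. Then the function 𝓘(t) = H(t)·exp(2γt) + 2γ·A(t) is constant. -/
/-- Weak Noether theorem for the BCK Lagrangian: along solutions of the damped Newton equation,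
`𝓘(t) = H(t) e^{2γt} + 2γ ∫₀ᵗ L_BCK` is constant, where `H = ½ q'² + V(q)`. -/
theorem weak_noether_bck_action (γ : ℝ) (hγ : γ ≠ 0) (V V' q q' : ℝ → ℝ)
    (hV : ∀ x, HasDerivAt V (V' x) x)
    (hq : ∀ t, HasDerivAt q (q' t) t)
    (hq' : ∀ t, HasDerivAt q' (-V' (q t) - 2 * γ * q' t) t) :
    ∀ s t : ℝ,
      ((1 / 2) * (q' s) ^ 2 + V (q s)) * Real.exp (2 * γ * s) +
          2 * γ * ∫ u in (0 : ℝ)..s, ((1 / 2) * (q' u) ^ 2 - V (q u)) * Real.exp (2 * γ * u) =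
      ((1 / 2) * (q' t) ^ 2 + V (q t)) * Real.exp (2 * γ * t) +
          2 * γ * ∫ u in (0 : ℝ)..t, ((1 / 2) * (q' u) ^ 2 - V (q u)) * Real.exp (2 * γ * u) := by
  have hqc : Continuous q := continuous_iff_continuousAt.2 fun t => (hq t).continuousAt
  have hq'c : Continuous q' := continuous_iff_continuousAt.2 fun t => (hq' t).continuousAt
  have hVc : Continuous V := continuous_iff_continuousAt.2 fun x => (hV x).continuousAt
  have hLc : Continuous fun u => ((1 / 2) * (q' u) ^ 2 - V (q u)) * Real.exp (2 * γ * u) := by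
    fun_prop
  set F : ℝ → ℝ := fun t =>
    ((1 / 2) * (q' t) ^ 2 + V (q t)) * Real.exp (2 * γ * t) +
      2 * γ * ∫ u in (0 : ℝ)..t, ((1 / 2) * (q' u) ^ 2 - V (q u)) * Real.exp (2 * γ * u) with hF
  have key : ∀ t, HasDerivAt F 0 t := by
    intro t
    have h1 : HasDerivAt (fun t => (1 / 2) * (q' t) ^ 2 + V (q t))
        ((1 / 2) * (2 * q' t * (-V' (q t) - 2 * γ * q' t)) + V' (q t) * q' t) t := by
      have := (((hq' t).pow 2).const_mul (1/2 : ℝ)).add ((hV (q t)).comp t (hq t))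
      simpa [Function.comp_def, Pi.add_def] using this
    have h2 : HasDerivAt (fun t => Real.exp (2 * γ * t)) (Real.exp (2 * γ * t) * (2 * γ)) t := by
      have := (Real.hasDerivAt_exp (2 * γ * t)).comp t ((hasDerivAt_id t).const_mul (2 * γ))
      simpa [Function.comp_def, mul_comm] using this
    have h3 : HasDerivAt (fun t => ∫ u in (0 : ℝ)..t, ((1 / 2) * (q' u) ^ 2 - V (q u)) * Real.exp (2 * γ * u))
        (((1 / 2) * (q' t) ^ 2 - V (q t)) * Real.exp (2 * γ * t)) t :=
      intervalIntegral.integral_hasDerivAt_right (hLc.intervalIntegrable 0 t)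
        (hLc.stronglyMeasurableAtFilter _ _) hLc.continuousAt
    have := (h1.mul h2).add (h3.const_mul (2 * γ))
    refine this.congr_deriv ?_
    ring
  intro s t
  exact is_const_of_deriv_eq_zero (fun x => (key x).differentiableAt)
    (fun x => (key x).deriv) s t
end

section
/- Let γ ≠ 0, F ∈ ℝ, and let q : ℝ → ℝ satisfy q''(t) = F - 2γq'(t). Define I₁(t) = (1/(2γ))(2γq'(t) - F)e^{2γt}. Then the function I₃(t) = γ·I₁(t)² is constant, and it equals the Noether first integral generated by X₃ = e^{2γt}(2γ∂_t + F∂_q) with divergence term f₃ = (F/(4γ))(8γ²q + F)e^{4γt}: namely γI₁² = f₃ - 2γe^{2γt}·L - (∂L/∂q')·e^{2γt}(F - 2γq'), where L = (½q'² + Fq)e^{2γt}. -/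
/-- For damped motion under a constant force, `I₃ = γ I₁²` is constant and equals the Noether
first integral generated by `X₃ = e^{2γt}(2γ∂_t + F∂_q)` with divergence term
`f₃ = (F/(4γ))(8γ²q + F)e^{4γt}`. -/
theorem I3_const_and_noether (γ F : ℝ) (hγ : γ ≠ 0) (q q' : ℝ → ℝ)
    (hq : ∀ t, HasDerivAt q (q' t) t)
    (hq' : ∀ t, HasDerivAt q' (F - 2 * γ * q' t) t) :
    (∀ s t : ℝ,
      γ * ((1 / (2 * γ)) * (2 * γ * q' s - F) * Real.exp (2 * γ * s)) ^ 2 =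
      γ * ((1 / (2 * γ)) * (2 * γ * q' t - F) * Real.exp (2 * γ * t)) ^ 2) ∧
    (∀ t : ℝ,
      γ * ((1 / (2 * γ)) * (2 * γ * q' t - F) * Real.exp (2 * γ * t)) ^ 2 =
        (F / (4 * γ)) * (8 * γ ^ 2 * q t + F) * Real.exp (4 * γ * t)
          - 2 * γ * Real.exp (2 * γ * t) *
              (((1 / 2) * (q' t) ^ 2 + F * q t) * Real.exp (2 * γ * t))
          - (q' t * Real.exp (2 * γ * t)) * (Real.exp (2 * γ * t) * (F - 2 * γ * q' t))) := by
  constructor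
  · -- g t = (2γ q' t - F) * exp(2γt) is constant
    have hg : ∀ t : ℝ, HasDerivAt (fun t => (2 * γ * q' t - F) * Real.exp (2 * γ * t)) 0 t := by
      intro t
      have he : HasDerivAt (fun t : ℝ => Real.exp (2 * γ * t)) (Real.exp (2 * γ * t) * (2 * γ)) t := by
        have := (hasDerivAt_id t).const_mul (2 * γ)
        exact (Real.hasDerivAt_exp (2 * γ * t)).comp t (by simpa using this)
      have h1 : HasDerivAt (fun t => 2 * γ * q' t - F) (2 * γ * (F - 2 * γ * q' t)) t :=
        ((hq' t).const_mul (2 * γ)).sub_const F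
      have := h1.mul he
      exact this.congr_deriv (by ring)
    have hconst : ∀ s t : ℝ, (2 * γ * q' s - F) * Real.exp (2 * γ * s)
        = (2 * γ * q' t - F) * Real.exp (2 * γ * t) := by
      intro s t
      exact is_const_of_deriv_eq_zero (fun x => (hg x).differentiableAt)
        (fun x => (hg x).deriv) s t
    intro s t
    rw [mul_assoc (1 / (2 * γ)), mul_assoc (1 / (2 * γ)), hconst s t]
  · intro t
    have h := Real.exp_nonneg (2 * γ * t)
    have : Real.exp (4 * γ * t) = Real.exp (2 * γ * t) * Real.exp (2 * γ * t) := by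
      rw [← Real.exp_add]; ring_nf
    rw [this]
    field_simp
    ring
end
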